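/- Let J be compactly supported, continuous, positive on a neighborhood of ρ(ν)ν where ρ(ν) = sup{ r > 0 : J(rν) > 0 } and ν is a fixed unit vector. Then along the direction ν, liminf_{|p|→∞, p/|p| = ν} ln(p · DH^ess(p)) / (ρ(ν)|p|) ≥ 1. -/

import Mathlib

open MeasureTheory Real Set Filter
open scoped RealInnerProductSpace

private lemma aux_neg_one_le (t : ℝ) : -1 ≤ t * Real.exp t := by
  rcases le_or_gt 0 t with h | h
  · nlinarith [Real.exp_pos t]
  · have h1 : -t + 1 ≤ Real.exp (-t) := Real.add_one_le_exp (-t)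
    have h2 : (0 : ℝ) < Real.exp t := Real.exp_pos t
    have h3 : Real.exp (-t) * Real.exp t = 1 := by
      rw [← Real.exp_add]; simp
    have h4 : (-t) * Real.exp t ≤ Real.exp (-t) * Real.exp t :=
      mul_le_mul_of_nonneg_right (by linarith) h2.le
    rw [h3] at h4; linarith

private lemma aux_abs_le {t T : ℝ} (hT : 0 ≤ T) (ht : t ≤ T) :
    |t * Real.exp t| ≤ Real.exp (2 * T) := by
  have h1 : (1 : ℝ) ≤ Real.exp (2 * T) := Real.one_le_exp (by linarith)
  rcases le_or_gt t 0 with h | h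
  · have h2 : t * Real.exp t ≤ 0 := mul_nonpos_of_nonpos_of_nonneg h (Real.exp_pos t).le
    rw [abs_of_nonpos h2]
    linarith [aux_neg_one_le t]
  · have h2 : (0 : ℝ) < Real.exp t := Real.exp_pos t
    rw [abs_of_nonneg (by positivity)]
    have h3 : t ≤ Real.exp t := by linarith [Real.add_one_le_exp t]
    calc t * Real.exp t ≤ Real.exp t * Real.exp t :=
          mul_le_mul_of_nonneg_right h3 h2.le
      _ = Real.exp (t + t) := by rw [Real.exp_add]
      _ ≤ Real.exp (2 * T) := Real.exp_le_exp.2 (by linarith)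

private lemma aux_mono {t u : ℝ} (ht : 0 ≤ t) (htu : t ≤ u) :
    t * Real.exp t ≤ u * Real.exp u :=
  mul_le_mul htu (Real.exp_le_exp.2 htu) (Real.exp_pos t).le (by linarith)

set_option maxHeartbeats 1000000 in
/-- for a compactly supported continuous kernel, along the direction `ν`,
`liminf_{s→∞} ln(p·DH^ess(p)) / (ρ(ν) s) ≥ 1` where `p = s ν` and
`ρ(ν) = sup{r > 0 : J(rν) > 0}`. -/
theorem stmt_14 {N : ℕ}
    (J : EuclideanSpace ℝ (Fin N) → ℝ) (ρ₀ : ℝ) (hρ₀ : 0 < ρ₀)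
    (hJnn : ∀ y, 0 ≤ J y)
    (hJcont : Continuous J)
    (hJcs : HasCompactSupport J)
    (hJpos : ∀ y ∈ Metric.ball (0 : EuclideanSpace ℝ (Fin N)) ρ₀ \ {0}, 0 < J y)
    (hint : Integrable (fun y => min 1 (‖y‖ ^ 2) * J y))
    (ν : EuclideanSpace ℝ (Fin N)) (hν : ‖ν‖ = 1)
    (ρν : ℝ)
    (hρν : IsLUB {r : ℝ | 0 < r ∧ 0 < J (r • ν)} ρν) :
    1 ≤ Filter.liminf
      (fun s : ℝ =>
        Real.log (∫ y in {y : EuclideanSpace ℝ (Fin N) | ρ₀ / 2 < ‖y‖},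
          ⟪s • ν, y⟫ * Real.exp ⟪s • ν, y⟫ * J y) / (ρν * s))
      Filter.atTop := by
  set I : ℝ → ℝ := fun s => ∫ y in {y : EuclideanSpace ℝ (Fin N) | ρ₀ / 2 < ‖y‖},
      ⟪s • ν, y⟫ * Real.exp ⟪s • ν, y⟫ * J y with hIdef
  show 1 ≤ Filter.liminf (fun s : ℝ => Real.log (I s) / (ρν * s)) Filter.atTop
  have hν0 : ν ≠ 0 := by
    intro h; rw [h, norm_zero] at hν; norm_num at hν
  -- membership of small radii in the set
  have hS : ∀ r : ℝ, 0 < r → r < ρ₀ → r ∈ {r : ℝ | 0 < r ∧ 0 < J (r • ν)} := by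
    intro r hr hrρ
    refine ⟨hr, hJpos _ ⟨?_, ?_⟩⟩
    · rw [Metric.mem_ball, dist_zero_right, norm_smul, Real.norm_eq_abs,
        abs_of_pos hr, hν, mul_one]
      exact hrρ
    · simp only [Set.mem_singleton_iff, smul_eq_zero, not_or]
      exact ⟨ne_of_gt hr, hν0⟩
  have hρ₀ν : ρ₀ ≤ ρν := by
    refine le_of_forall_lt fun c hc => ?_
    set r : ℝ := (max c (ρ₀ / 2) + ρ₀) / 2 with hr
    have h1 : max c (ρ₀ / 2) < ρ₀ := max_lt hc (by linarith)
    have h2 : 0 < r := by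
      have := le_max_right c (ρ₀ / 2); simp only [hr]; linarith
    have h3 : r < ρ₀ := by simp only [hr]; linarith
    have h4 : c < r := by
      have := le_max_left c (ρ₀ / 2); simp only [hr]; linarith
    exact lt_of_lt_of_le h4 (hρν.1 (hS r h2 h3))
  have hρν_pos : 0 < ρν := lt_of_lt_of_le hρ₀ hρ₀ν
  have hS₀meas : MeasurableSet {y : EuclideanSpace ℝ (Fin N) | ρ₀ / 2 < ‖y‖} :=
    (isOpen_lt continuous_const continuous_norm).measurableSet
  have hJint : Integrable J := hJcont.integrable_of_hasCompactSupport hJcs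
  set CJ : ℝ := ∫ y, J y with hCJ
  have hCJ_nn : 0 ≤ CJ := integral_nonneg hJnn
  have hf_cont : ∀ s : ℝ,
      Continuous fun y : EuclideanSpace ℝ (Fin N) => ⟪s • ν, y⟫ * Real.exp ⟪s • ν, y⟫ * J y := by
    intro s
    have h1 : Continuous fun y : EuclideanSpace ℝ (Fin N) => ⟪s • ν, y⟫ :=
      continuous_const.inner continuous_id
    exact (h1.mul (Real.continuous_exp.comp h1)).mul hJcont
  have hf_int : ∀ s : ℝ,
      Integrable fun y : EuclideanSpace ℝ (Fin N) => ⟪s • ν, y⟫ * Real.exp ⟪s • ν, y⟫ * J y := by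
    intro s
    exact (hf_cont s).integrable_of_hasCompactSupport hJcs.mul_left
  -- support radius
  obtain ⟨R₀, hR₀⟩ := hJcs.isBounded.subset_closedBall 0
  set R : ℝ := max R₀ 1 with hRdef
  have hR1 : (1 : ℝ) ≤ R := le_max_right _ _
  have hsupp : ∀ y : EuclideanSpace ℝ (Fin N), J y ≠ 0 → ‖y‖ ≤ R := by
    intro y hy
    have h1 : y ∈ Metric.closedBall (0 : EuclideanSpace ℝ (Fin N)) R₀ := hR₀ (subset_tsupport J hy)
    rw [Metric.mem_closedBall, dist_zero_right] at h1
    exact le_trans h1 (le_max_left _ _)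
  -- upper bound for the integral
  have hIub : ∀ s : ℝ, 0 ≤ s → I s ≤ Real.exp (2 * (s * R)) * CJ := by
    intro s hs
    have hpt : ∀ y : EuclideanSpace ℝ (Fin N),
        |⟪s • ν, y⟫ * Real.exp ⟪s • ν, y⟫ * J y| ≤ Real.exp (2 * (s * R)) * J y := by
      intro y
      rcases eq_or_ne (J y) 0 with h | h
      · simp [h]
      · have hy : ‖y‖ ≤ R := hsupp y h
        have hsR : 0 ≤ s * R := mul_nonneg hs (by linarith)
        have ht : ⟪s • ν, y⟫ ≤ s * R := by
          rw [real_inner_smul_left]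
          have h2 : ⟪ν, y⟫ ≤ ‖y‖ := by
            calc ⟪ν, y⟫ ≤ |⟪ν, y⟫| := le_abs_self _
              _ ≤ ‖ν‖ * ‖y‖ := abs_real_inner_le_norm ν y
              _ = ‖y‖ := by rw [hν, one_mul]
          nlinarith [mul_le_mul_of_nonneg_left h2 hs, mul_le_mul_of_nonneg_left hy hs]
        calc |⟪s • ν, y⟫ * Real.exp ⟪s • ν, y⟫ * J y|
            = |⟪s • ν, y⟫ * Real.exp ⟪s • ν, y⟫| * J y := by
              rw [abs_mul, abs_of_nonneg (hJnn y)]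
          _ ≤ Real.exp (2 * (s * R)) * J y :=
              mul_le_mul_of_nonneg_right (aux_abs_le hsR ht) (hJnn y)
    calc I s ≤ |I s| := le_abs_self _
      _ ≤ ∫ y in {y : EuclideanSpace ℝ (Fin N) | ρ₀ / 2 < ‖y‖},
            |⟪s • ν, y⟫ * Real.exp ⟪s • ν, y⟫ * J y| := by
          simpa only [Real.norm_eq_abs] using
            norm_integral_le_integral_norm
              (μ := volume.restrict {y : EuclideanSpace ℝ (Fin N) | ρ₀ / 2 < ‖y‖})
              (fun y : EuclideanSpace ℝ (Fin N) => ⟪s • ν, y⟫ * Real.exp ⟪s • ν, y⟫ * J y)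
      _ ≤ ∫ y in {y : EuclideanSpace ℝ (Fin N) | ρ₀ / 2 < ‖y‖}, Real.exp (2 * (s * R)) * J y :=
          setIntegral_mono_on (hf_int s).abs.integrableOn
            ((hJint.const_mul _).integrableOn) hS₀meas (fun y _ => hpt y)
      _ = Real.exp (2 * (s * R)) * ∫ y in {y : EuclideanSpace ℝ (Fin N) | ρ₀ / 2 < ‖y‖}, J y :=
          integral_const_mul _ _
      _ ≤ Real.exp (2 * (s * R)) * CJ :=
          mul_le_mul_of_nonneg_left
            (setIntegral_le_integral hJint (Eventually.of_forall hJnn))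
            (Real.exp_pos _).le
  -- key lower bound
  have key : ∀ b : ℝ, b < 1 →
      ∀ᶠ s in atTop, b ≤ Real.log (I s) / (ρν * s) ∧ 0 < I s := by
    intro b hb
    set m : ℝ := max (b * ρν) (ρ₀ / 2) with hm
    have hm_pos : 0 < m := lt_of_lt_of_le (by linarith) (le_max_right _ _)
    have hm_lt : m < ρν := max_lt (by nlinarith) (by linarith)
    obtain ⟨r, hrS, hmr, hrρν⟩ := hρν.exists_between hm_lt
    obtain ⟨hr_pos, hJr⟩ := hrS
    have hopen : IsOpen {y : EuclideanSpace ℝ (Fin N) | J (r • ν) / 2 < J y} :=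
      isOpen_lt continuous_const hJcont
    have hmem : r • ν ∈ {y : EuclideanSpace ℝ (Fin N) | J (r • ν) / 2 < J y} := by
      simp only [Set.mem_setOf_eq]; linarith
    obtain ⟨δ, hδ, hball⟩ := Metric.isOpen_iff.1 hopen _ hmem
    set δ₁ : ℝ := min δ ((r - m) / 2) with hδ₁def
    have hδ₁_pos : 0 < δ₁ := lt_min hδ (by linarith)
    have hδ₁_le : δ₁ ≤ (r - m) / 2 := min_le_right _ _
    set a : ℝ := r - δ₁ with ha
    have ham : m < a := by simp only [ha]; linarith
    have ha_pos : 0 < a := hm_pos.trans ham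
    have haρ : ρ₀ / 2 < a := lt_of_le_of_lt (le_max_right (b * ρν) (ρ₀ / 2)) ham
    have hab : b * ρν < a := lt_of_le_of_lt (le_max_left (b * ρν) (ρ₀ / 2)) ham
    set B : Set (EuclideanSpace ℝ (Fin N)) := Metric.ball (r • ν) δ₁ with hBdef
    have hrνnorm : ‖r • ν‖ = r := by
      rw [norm_smul, Real.norm_eq_abs, abs_of_pos hr_pos, hν, mul_one]
    have hBsub : B ⊆ {y : EuclideanSpace ℝ (Fin N) | ρ₀ / 2 < ‖y‖} := by
      intro y hy
      have h1 : ‖y - r • ν‖ < δ₁ := by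
        rw [← dist_eq_norm]; exact hy
      have h3 : ‖r • ν‖ - ‖y‖ ≤ ‖r • ν - y‖ := norm_sub_norm_le _ _
      rw [norm_sub_rev] at h3
      show ρ₀ / 2 < ‖y‖
      have := le_max_right (b * ρν) (ρ₀ / 2)
      rw [hrνnorm] at h3
      linarith
    have hBinner : ∀ y ∈ B, a ≤ ⟪ν, y⟫ := by
      intro y hy
      have h1 : ‖y - r • ν‖ < δ₁ := by rw [← dist_eq_norm]; exact hy
      have h2 : |⟪ν, y - r • ν⟫| ≤ ‖y - r • ν‖ := by
        calc |⟪ν, y - r • ν⟫| ≤ ‖ν‖ * ‖y - r • ν‖ := abs_real_inner_le_norm _ _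
          _ = ‖y - r • ν‖ := by rw [hν, one_mul]
      have h3 : ⟪ν, y - r • ν⟫ = ⟪ν, y⟫ - ⟪ν, r • ν⟫ := inner_sub_right ν y (r • ν)
      have h4 : ⟪ν, r • ν⟫ = r := by
        rw [real_inner_smul_right, real_inner_self_eq_norm_sq, hν]; ring
      have h5 : -δ₁ ≤ ⟪ν, y - r • ν⟫ := by
        have := neg_abs_le ⟪ν, y - r • ν⟫; linarith
      rw [h3, h4] at h5
      simp only [ha]; linarith
    have hBJ : ∀ y ∈ B, J (r • ν) / 2 ≤ J y := by
      intro y hy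
      exact le_of_lt (hball (Metric.ball_subset_ball (min_le_left _ _) hy))
    set c : ℝ := J (r • ν) / 2 with hc
    have hc_pos : 0 < c := by simp only [hc]; linarith
    set V : ℝ := (volume B).toReal with hV
    have hV_pos : 0 < V :=
      ENNReal.toReal_pos (Metric.measure_ball_pos _ _ hδ₁_pos).ne' measure_ball_lt_top.ne
    set A : ℝ := c * V with hA
    have hA_pos : 0 < A := mul_pos hc_pos hV_pos
    have hIlow : ∀ s : ℝ, 0 < s →
        A * (s * a * Real.exp (s * a)) - CJ ≤ I s := by
      intro s hs
      have hint_s := hf_int s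
      have hunion : B ∪ ({y : EuclideanSpace ℝ (Fin N) | ρ₀ / 2 < ‖y‖} \ B) = {y : EuclideanSpace ℝ (Fin N) | ρ₀ / 2 < ‖y‖} :=
        Set.union_diff_cancel hBsub
      have hsplit : I s = (∫ y in B, ⟪s • ν, y⟫ * Real.exp ⟪s • ν, y⟫ * J y)
          + ∫ y in {y : EuclideanSpace ℝ (Fin N) | ρ₀ / 2 < ‖y‖} \ B,
              ⟪s • ν, y⟫ * Real.exp ⟪s • ν, y⟫ * J y := by
        rw [← setIntegral_union disjoint_sdiff_right
          (hS₀meas.diff measurableSet_ball) hint_s.integrableOn hint_s.integrableOn,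
          hunion]
      have h1 : (s * a * Real.exp (s * a) * c) * V ≤
          ∫ y in B, ⟪s • ν, y⟫ * Real.exp ⟪s • ν, y⟫ * J y := by
        refine setIntegral_ge_of_const_le_real measurableSet_ball measure_ball_lt_top.ne
          (fun y hy => ?_) hint_s.integrableOn
        have hti : ⟪s • ν, y⟫ = s * ⟪ν, y⟫ := real_inner_smul_left _ _ _
        have h2 : s * a ≤ s * ⟪ν, y⟫ := mul_le_mul_of_nonneg_left (hBinner y hy) hs.le
        have h3 : (0 : ℝ) ≤ s * a := by positivity
        have h4 := aux_mono h3 h2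
        have h5 := hBJ y hy
        rw [hti]
        have h6 : (0 : ℝ) ≤ s * ⟪ν, y⟫ * Real.exp (s * ⟪ν, y⟫) :=
          le_trans (by positivity) h4
        exact mul_le_mul h4 h5 hc_pos.le h6
      have h2 : -CJ ≤ ∫ y in {y : EuclideanSpace ℝ (Fin N) | ρ₀ / 2 < ‖y‖} \ B,
          ⟪s • ν, y⟫ * Real.exp ⟪s • ν, y⟫ * J y := by
        have hpt : ∀ y : EuclideanSpace ℝ (Fin N), -J y ≤ ⟪s • ν, y⟫ * Real.exp ⟪s • ν, y⟫ * J y := by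
          intro y
          have h7 := aux_neg_one_le ⟪s • ν, y⟫
          have h8 := hJnn y
          nlinarith [mul_le_mul_of_nonneg_right h7 h8]
        calc -CJ ≤ -∫ y in {y : EuclideanSpace ℝ (Fin N) | ρ₀ / 2 < ‖y‖} \ B, J y := by
              have := setIntegral_le_integral (s := {y : EuclideanSpace ℝ (Fin N) | ρ₀ / 2 < ‖y‖} \ B)
                hJint (Eventually.of_forall hJnn)
              rw [hCJ]
              linarith
          _ = ∫ y in {y : EuclideanSpace ℝ (Fin N) | ρ₀ / 2 < ‖y‖} \ B, -J y := (integral_neg _).symm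
          _ ≤ _ := setIntegral_mono_on hJint.neg.integrableOn hint_s.integrableOn
              (hS₀meas.diff measurableSet_ball) (fun y _ => hpt y)
      have h9 : A * (s * a * Real.exp (s * a)) = (s * a * Real.exp (s * a) * c) * V := by
        simp only [hA]; ring
      rw [hsplit, h9]
      exact le_trans (by linarith) (add_le_add h1 h2)
    rw [eventually_atTop]
    refine ⟨max ((CJ + 1) / (A * a)) 1, fun s hs => ?_⟩
    have hs1 : (1 : ℝ) ≤ s := le_trans (le_max_right _ _) hs
    have hs0 : (0 : ℝ) < s := by linarith
    have hsA : (CJ + 1) / (A * a) ≤ s := le_trans (le_max_left _ _) hs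
    have hAa : 0 < A * a := mul_pos hA_pos ha_pos
    have h7 : CJ + 1 ≤ s * (A * a) := (div_le_iff₀ hAa).1 hsA
    have h8 : (1 : ℝ) ≤ Real.exp (s * a) := Real.one_le_exp (by positivity)
    have h9 : Real.exp (s * a) ≤ I s := by
      have h10 := hIlow s hs0
      nlinarith [mul_le_mul_of_nonneg_right h7 (Real.exp_pos (s * a)).le,
        mul_le_mul_of_nonneg_left h8 hCJ_nn]
    have hIpos : 0 < I s := lt_of_lt_of_le (Real.exp_pos _) h9
    refine ⟨?_, hIpos⟩
    have h10 : s * a ≤ Real.log (I s) := by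
      have h11 := Real.log_le_log (Real.exp_pos (s * a)) h9
      rwa [Real.log_exp] at h11
    rw [le_div_iff₀ (by positivity : (0 : ℝ) < ρν * s)]
    nlinarith [mul_le_mul_of_nonneg_right hab.le hs0.le]
  -- coboundedness from above
  have hub : ∀ᶠ s in atTop,
      Real.log (I s) / (ρν * s) ≤ (2 * R + Real.log (max CJ 1)) / ρν := by
    filter_upwards [key 0 (by norm_num), eventually_ge_atTop (1 : ℝ)] with s hs hs1
    obtain ⟨-, hIpos⟩ := hs
    set M : ℝ := max CJ 1 with hM
    have hM1 : (1 : ℝ) ≤ M := le_max_right _ _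
    have hlogM : 0 ≤ Real.log M := Real.log_nonneg hM1
    have h1 : I s ≤ Real.exp (2 * (s * R)) * M :=
      le_trans (hIub s (by linarith))
        (mul_le_mul_of_nonneg_left (le_max_left _ _) (Real.exp_pos _).le)
    have h2 : Real.exp (2 * (s * R)) * M = Real.exp (2 * (s * R) + Real.log M) := by
      rw [Real.exp_add, Real.exp_log (by linarith : (0 : ℝ) < M)]
    rw [h2] at h1
    have h3 : Real.log (I s) ≤ 2 * (s * R) + Real.log M := by
      have h4 := Real.log_le_log hIpos h1
      rwa [Real.log_exp] at h4
    rw [div_le_div_iff₀ (by positivity) hρν_pos]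
    nlinarith [mul_le_mul_of_nonneg_right h3 hρν_pos.le,
      mul_nonneg (mul_nonneg hlogM hρν_pos.le) (by linarith : (0 : ℝ) ≤ s - 1)]
  have hcob : IsCoboundedUnder (· ≥ ·) atTop
      (fun s : ℝ => Real.log (I s) / (ρν * s)) :=
    IsBoundedUnder.isCoboundedUnder_ge ⟨_, eventually_map.2 hub⟩
  refine le_of_forall_lt fun c hc => ?_
  have hb : (c + 1) / 2 < 1 := by linarith
  have h1 : (c + 1) / 2 ≤ Filter.liminf
      (fun s : ℝ => Real.log (I s) / (ρν * s)) Filter.atTop :=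
    le_liminf_of_le hcob ((key _ hb).mono fun s hs => hs.1)
  exact lt_of_lt_of_le (by linarith) h1
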